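/- Let G be a topological group, U an open neighborhood of the identity, and V_{-1} := U. Suppose (V_k)_{k∈ℕ} are neighborhoods of the identity such that V_k ∪ V_k·V_k ∪ V_k·V_k·V_k ⊆ V_{k-1} for all k ≥ 0. Then for any finite set of distinct indices i_0, …, i_n with minimum i_l, the product V_{i_0}·V_{i_1}···V_{i_n} is contained in V_{i_l - 1}. -/

import Mathlib

open Filter Topology Pointwise

/-- `u` converges to the identity in the group topology `t`. -/
def TendstoOne {G : Type*} [Group G] (t : GroupTopology G) (u : ℕ → G) : Prop :=
  Filter.Tendsto u Filter.atTop (@nhds G t.toTopologicalSpace 1)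

/-- The group topology `t` is Hausdorff. -/
def IsHausdorffGT {G : Type*} [Group G] (t : GroupTopology G) : Prop :=
  @T2Space G t.toTopologicalSpace

/-- `S` is a `T_s`-set of sequences: some Hausdorff group topology makes every
sequence of `S` converge to the identity. -/
def IsTsSet {G : Type*} [Group G] (S : Set (ℕ → G)) : Prop :=
  ∃ t : GroupTopology G, IsHausdorffGT t ∧ ∀ u ∈ S, TendstoOne t u

/-- `τ` is the finest Hausdorff group topology on `G` in which every sequence of `S`
converges to the identity (recall that in Mathlib's order on topologies, finer = smaller). -/
def IsTauS {G : Type*} [Group G] (S : Set (ℕ → G)) (τ : GroupTopology G) : Prop :=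
  IsHausdorffGT τ ∧ (∀ u ∈ S, TendstoOne τ u) ∧
    ∀ t : GroupTopology G, IsHausdorffGT t → (∀ u ∈ S, TendstoOne t u) → τ ≤ t

/-- The given topological-group structure on `G`, as a term of `GroupTopology G`. -/
def ambientGT (G : Type*) [Group G] [τ : TopologicalSpace G] [h : IsTopologicalGroup G] :
    GroupTopology G := ⟨τ, h⟩

/-- The set of all sequences converging to the identity in a group topology. -/
def SeqConvOne {G : Type*} [Group G] (t : GroupTopology G) : Set (ℕ → G) :=
  {u | TendstoOne t u}

/-- `(G, τ)` is an `s`-group: its topology is the finest Hausdorff group topology in which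
every member of some `T_s`-set of sequences converges to the identity. -/
def IsSGroup (G : Type*) [Group G] [TopologicalSpace G] [IsTopologicalGroup G] [T2Space G] :
    Prop :=
  ∃ S : Set (ℕ → G), IsTauS S (ambientGT G)

/-- with `V (-1) := U`, if `V k ∪ V k * V k ∪ V k * V k * V k ⊆ V (k-1)` for all
`k ≥ 0`, then for distinct indices `i 0, …, i n` with minimum `m`, the product
`V (i 0) * ⋯ * V (i n)` is contained in `V (m - 1)` (which is `U` when `m = 0`). -/
theorem stmt1 {G : Type*} [Group G] [TopologicalSpace G] [IsTopologicalGroup G]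
    (U : Set G) (hU : IsOpen U) (h1 : (1 : G) ∈ U)
    (V : ℕ → Set G) (hV1 : ∀ k, V k ∈ nhds (1 : G))
    (hchain : ∀ k : ℕ,
      V k ∪ V k * V k ∪ V k * V k * V k ⊆ if k = 0 then U else V (k - 1)) :
    ∀ n : ℕ, ∀ i : Fin (n + 1) → ℕ, Function.Injective i →
      (List.ofFn fun j : Fin (n + 1) => V (i j)).prod ⊆
        (if Finset.univ.inf' Finset.univ_nonempty i = 0 then U
          else V (Finset.univ.inf' Finset.univ_nonempty i - 1)) := by
  classical
  set W : ℕ → Set G := fun k => if k = 0 then U else V (k - 1) with hWdef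
  have hstep : ∀ k, V (k + 1) ⊆ V k := by
    intro k x hx
    have := hchain (k + 1) (Or.inl (Or.inl hx))
    simpa using this
  have hmono : ∀ {j k : ℕ}, j ≤ k → V k ⊆ V j := by
    intro j k h
    induction h with
    | refl => exact subset_rfl
    | @step k h ih => exact (hstep k).trans ih
  have hVW : ∀ k, V k ⊆ W k := fun k x hx => hchain k (Or.inl (Or.inl hx))
  have hVVW : ∀ k, V k * V k ⊆ W k := fun k x hx => hchain k (Or.inl (Or.inr hx))
  have hVVVW : ∀ k, V k * V k * V k ⊆ W k := fun k x hx => hchain k (Or.inr hx)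
  have key : ∀ N : ℕ, ∀ L : List ℕ, L.length ≤ N → ∀ m, m ∈ L → L.Nodup →
      (∀ j ∈ L, m ≤ j) → (L.map V).prod ⊆ W m := by
    intro N
    induction N with
    | zero =>
      intro L hlen m hm _ _
      rw [Nat.le_zero, List.length_eq_zero_iff] at hlen
      subst hlen; simp at hm
    | succ N ih =>
      intro L hlen m hm hnd hle
      obtain ⟨A, B, rfl⟩ := List.append_of_mem hm
      have hndA : A.Nodup := (List.nodup_append.mp hnd).1
      have hndB : B.Nodup := ((List.nodup_cons.mp (List.nodup_append.mp hnd).2.1)).2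
      have hmA : m ∉ A := by
        intro hmem
        exact (List.nodup_append.mp hnd).2.2 m hmem m List.mem_cons_self rfl
      have hmB : m ∉ B := (List.nodup_cons.mp (List.nodup_append.mp hnd).2.1).1
      have hlen' : A.length + B.length ≤ N := by
        simp [List.length_append] at hlen; omega
      -- helper for a sublist whose elements are all ≥ m+1
      have hsub : ∀ C : List ℕ, C ≠ [] → C.Nodup → C.length ≤ N →
          (∀ j ∈ C, m ≤ j ∧ j ≠ m) → (C.map V).prod ⊆ V m := by
        intro C hC0 hCnd hClen hCge
        have hne : C.toFinset.Nonempty := by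
          obtain ⟨c, hc⟩ := List.exists_mem_of_ne_nil C hC0
          exact ⟨c, List.mem_toFinset.mpr hc⟩
        set m' := C.toFinset.min' hne with hm'
        have hm'C : m' ∈ C := List.mem_toFinset.mp (C.toFinset.min'_mem hne)
        have hm'le : ∀ j ∈ C, m' ≤ j := fun j hj =>
          C.toFinset.min'_le j (List.mem_toFinset.mpr hj)
        have h1' : (C.map V).prod ⊆ W m' := ih C hClen m' hm'C hCnd hm'le
        have hm'gt : m + 1 ≤ m' := by
          have := hCge m' hm'C; omega
        refine h1'.trans ?_
        have : W m' = V (m' - 1) := by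
          simp only [hWdef]; rw [if_neg (by omega)]
        rw [this]
        exact hmono (by omega)
      have hallA : ∀ j ∈ A, m ≤ j ∧ j ≠ m := by
        intro j hj
        refine ⟨hle j (by simp [hj]), ?_⟩
        rintro rfl; exact hmA hj
      have hallB : ∀ j ∈ B, m ≤ j ∧ j ≠ m := by
        intro j hj
        refine ⟨hle j (by simp [hj]), ?_⟩
        rintro rfl; exact hmB hj
      have hprodrw : ((A ++ m :: B).map V).prod
          = (A.map V).prod * (V m * (B.map V).prod) := by
        simp [List.prod_append]
      rw [hprodrw]
      rcases eq_or_ne A [] with rfl | hA0 <;> rcases eq_or_ne B [] with rfl | hB0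
      · simpa using hVW m
      · have hB := hsub B hB0 hndB (by omega) hallB
        have : V m * (B.map V).prod ⊆ V m * V m :=
          Set.mul_subset_mul subset_rfl hB
        simpa using this.trans (hVVW m)
      · have hA := hsub A hA0 hndA (by omega) hallA
        have h2 : (A.map V).prod * V m ⊆ V m * V m :=
          Set.mul_subset_mul hA subset_rfl
        simpa using h2.trans (hVVW m)
      · have hA := hsub A hA0 hndA (by omega) hallA
        have hB := hsub B hB0 hndB (by omega) hallB
        have : (A.map V).prod * (V m * (B.map V).prod) ⊆ V m * (V m * V m) :=
          Set.mul_subset_mul hA (Set.mul_subset_mul subset_rfl hB)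
        refine this.trans ?_
        rw [← mul_assoc]; exact hVVVW m
  intro n i hi
  set m := Finset.univ.inf' Finset.univ_nonempty i with hm
  show (List.ofFn fun j => V (i j)).prod ⊆ W m
  have hmap : (List.ofFn fun j => V (i j)) = (List.ofFn i).map V := by
    rw [List.map_ofFn]; rfl
  rw [hmap]
  refine key (n + 1) (List.ofFn i) (by simp) m ?_ (List.nodup_ofFn.mpr hi) ?_
  · obtain ⟨j, _, hj⟩ := Finset.exists_mem_eq_inf' (Finset.univ_nonempty) i
    rw [List.mem_ofFn]
    exact ⟨j, hj.symm⟩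
  · intro j hj
    rw [List.mem_ofFn] at hj
    obtain ⟨k, rfl⟩ := hj
    exact Finset.inf'_le i (Finset.mem_univ k)
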